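/- Under the cohomology ladder setup, fix an integer k and let λ^k : CX^k → BX^k be the unique Λ-linear map satisfying λ^k ∘ j^k + f^k ∘ θ^k = id_{BX^k} and λ^k ∘ g^k = 0. Then g^k is injective, and the Λ-linear map BX^k → BY^k ⊕ (CX^k / g^k(CY^k)) sending x to (θ^k x, class of j^k x) is an isomorphism, whose inverse sends (y, class of w̃) to f^k y + λ^k w̃ (a well-defined assignment since λ^k ∘ g^k = 0). (Proposition 4.2 of the paper, abstracting H^k(X) ≅ H^k(Y) ⊕ H^k(W̃)/H^k(W).) -/

import Mathlib

open Function

/-- Proposition 4.2: under the cohomology ladder setup, `g` is injective and the map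
`x ↦ (θ x, class of j x)` is an isomorphism `BX^k ≅ BY^k ⊕ CX^k/g(CY^k)`, with inverse
`(y, class of w̃) ↦ f y + λ w̃`. -/
theorem cohomology_decomposition
    (Λ : Type*) [CommRing Λ]
    (R BX BY CX CY : ℤ → Type*)
    [∀ k, AddCommGroup (R k)] [∀ k, Module Λ (R k)]
    [∀ k, AddCommGroup (BX k)] [∀ k, Module Λ (BX k)]
    [∀ k, AddCommGroup (BY k)] [∀ k, Module Λ (BY k)]
    [∀ k, AddCommGroup (CX k)] [∀ k, Module Λ (CX k)]
    [∀ k, AddCommGroup (CY k)] [∀ k, Module Λ (CY k)]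
    (rX : ∀ k, R k →ₗ[Λ] BX k) (j : ∀ k, BX k →ₗ[Λ] CX k) (dX : ∀ k, CX k →ₗ[Λ] R (k+1))
    (rY : ∀ k, R k →ₗ[Λ] BY k) (i : ∀ k, BY k →ₗ[Λ] CY k) (dY : ∀ k, CY k →ₗ[Λ] R (k+1))
    (hXex₁ : ∀ k, Function.Exact (rX k) (j k))
    (hXex₂ : ∀ k, Function.Exact (j k) (dX k))
    (hXex₃ : ∀ k, Function.Exact (dX k) (rX (k+1)))
    (hYex₁ : ∀ k, Function.Exact (rY k) (i k))
    (hYex₂ : ∀ k, Function.Exact (i k) (dY k))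
    (hYex₃ : ∀ k, Function.Exact (dY k) (rY (k+1)))
    (f : ∀ k, BY k →ₗ[Λ] BX k) (g : ∀ k, CY k →ₗ[Λ] CX k)
    (hfr : ∀ k, (f k).comp (rY k) = rX k)
    (hjf : ∀ k, (j k).comp (f k) = (g k).comp (i k))
    (hdg : ∀ k, (dX k).comp (g k) = dY k)
    (θ : ∀ k, BX k →ₗ[Λ] BY k) (η : ∀ k, CX k →ₗ[Λ] CY k)
    (hθr : ∀ k, (θ k).comp (rX k) = rY k)
    (hiθ : ∀ k, (i k).comp (θ k) = (η k).comp (j k))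
    (hdη : ∀ k, (dY k).comp (η k) = dX k)
    (hθf : ∀ k, (θ k).comp (f k) = LinearMap.id)
    (hηg : ∀ k, (η k).comp (g k) = LinearMap.id)
    (k : ℤ)
    (lam : CX k →ₗ[Λ] BX k)
    (hlam₁ : lam.comp (j k) + (f k).comp (θ k) = LinearMap.id)
    (hlam₂ : lam.comp (g k) = 0) :
    Function.Injective ⇑(g k) ∧
    ∃ Ψ : (BY k × (CX k ⧸ LinearMap.range (g k))) →ₗ[Λ] BX k,
      (∀ (y : BY k) (w : CX k), Ψ (y, Submodule.Quotient.mk w) = f k y + lam w) ∧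
      Ψ.comp (LinearMap.prod (θ k) ((LinearMap.range (g k)).mkQ.comp (j k)))
        = LinearMap.id ∧
      (LinearMap.prod (θ k) ((LinearMap.range (g k)).mkQ.comp (j k))).comp Ψ
        = LinearMap.id := by
  have hginj : Function.Injective ⇑(g k) :=
    Function.LeftInverse.injective (g := ⇑(η k)) (fun x => LinearMap.congr_fun (hηg k) x)
  refine ⟨hginj, ?_⟩
  -- decomposition of CX
  have hdec : ∀ w : CX k, ∃ b : BX k, j k b = w - g k (η k w) := by
    intro w
    have h0 : dX k (w - g k (η k w)) = 0 := by
      have h1 : dX k (g k (η k w)) = dY k (η k w) := LinearMap.congr_fun (hdg k) (η k w)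
      have h2 : dY k (η k w) = dX k w := LinearMap.congr_fun (hdη k) w
      simp [map_sub, h1, h2]
    exact ((hXex₂ k) _).mp h0
  have hlamj : ∀ b : BX k, lam (j k b) = b - f k (θ k b) := by
    intro b
    have := LinearMap.congr_fun hlam₁ b
    simp only [LinearMap.add_apply, LinearMap.comp_apply, LinearMap.id_apply] at this
    linear_combination (norm := module) this
  have hlamg : ∀ c : CY k, lam (g k c) = 0 := fun c => LinearMap.congr_fun hlam₂ c
  have hθlam : ∀ w : CX k, θ k (lam w) = 0 := by
    intro w
    obtain ⟨b, hb⟩ := hdec w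
    have hw : w = j k b + g k (η k w) := by rw [hb]; abel
    have hθf' : ∀ y, θ k (f k y) = y := fun y => LinearMap.congr_fun (hθf k) y
    rw [hw, map_add, hlamg, hlamj, map_add, map_sub, hθf']
    simp
  set Q := LinearMap.range (g k)
  have hker : Q ≤ LinearMap.ker lam := by
    rintro w ⟨c, rfl⟩; exact hlamg c
  refine ⟨(f k).coprod (Q.liftQ lam hker), ?_, ?_, ?_⟩
  · intro y w; simp [Q]
  · apply LinearMap.ext
    intro b
    have := LinearMap.congr_fun hlam₁ b
    simp only [LinearMap.add_apply, LinearMap.comp_apply, LinearMap.id_apply] at this ⊢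
    simp only [LinearMap.prod_apply, Pi.prod, LinearMap.coprod_apply, Submodule.mkQ_apply,
      Submodule.liftQ_apply]
    rw [add_comm]; exact this
  · apply LinearMap.ext
    rintro ⟨y, q⟩
    obtain ⟨w, rfl⟩ := Submodule.mkQ_surjective Q q
    have hθf' : θ k (f k y) = y := LinearMap.congr_fun (hθf k) y
    have hjf2 : ∀ b', j k (f k b') = g k (i k b') := fun b' => by
      simpa using LinearMap.congr_fun (hjf k) b' 
    simp only [LinearMap.comp_apply, LinearMap.coprod_apply, Submodule.mkQ_apply,
      Submodule.liftQ_apply, LinearMap.prod_apply, Pi.prod, Function.prod, LinearMap.id_apply]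
    refine Prod.ext ?_ ?_
    · simp [map_add, hθf', hθlam]
    · simp only [map_add]
      have hjf' := hjf2 y
      obtain ⟨b, hb⟩ := hdec w
      have hw : w = j k b + g k (η k w) := by rw [hb]; abel
      have hjlam : Submodule.Quotient.mk (p := Q) (j k (lam w)) = Submodule.Quotient.mk w := by
        rw [Submodule.Quotient.eq]
        have : j k (lam w) = j k b - g k (i k (θ k b)) := by
          conv_lhs => rw [hw, map_add, hlamg, add_zero, hlamj, map_sub]
          rw [hjf2 (θ k b)]
        rw [this, hw]
        have hm : j k b - g k (i k (θ k b)) - (j k b + g k (η k w))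
            = -(g k (i k (θ k b)) + g k (η k w)) := by abel
        rw [hm]
        exact Submodule.neg_mem Q (Q.add_mem ⟨i k (θ k b), rfl⟩ ⟨η k w, rfl⟩)
      calc (Submodule.Quotient.mk (j k (f k y)) : CX k ⧸ Q) + Submodule.Quotient.mk (j k (lam w))
          = 0 + Submodule.Quotient.mk w := by
            rw [hjlam, hjf']
            congr 1
            exact (Submodule.Quotient.mk_eq_zero Q).mpr ⟨i k y, rfl⟩
        _ = Submodule.Quotient.mk w := by rw [zero_add]
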